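/- Let n ≥ 1, c ∈ ℝ with c ≠ 0, x ∈ (-1,1), and let Q be a polynomial of degree n+1 with Q(x) = 0, Q'(1) = 1, Q'(-1) = -1, such that ∫_{-1}^{1} t^k [c(Q(t) - |t - x|) + 1] dt = 0 for all k = 0,1,...,n-1. Then ∫_{-1}^{1} [∂/∂t (Q(t) - |t - x|)]^2 dt = 2/c. -/

import Mathlib

open intervalIntegral Polynomial MeasureTheory

lemma poly_ftc (p : Polynomial ℝ) (a b : ℝ) :
    (∫ t in a..b, (Polynomial.derivative p).eval t) = p.eval b - p.eval a :=
  intervalIntegral.integral_eq_sub_of_hasDerivAt (fun t _ => p.hasDerivAt t)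
    ((p.derivative.continuous).intervalIntegrable _ _)

lemma poly_ibp (p : Polynomial ℝ) (a b : ℝ) :
    (∫ t in a..b, ((Polynomial.derivative p).eval t)^2) =
      (Polynomial.derivative p).eval b * p.eval b - (Polynomial.derivative p).eval a * p.eval a
        - ∫ t in a..b, (Polynomial.derivative (Polynomial.derivative p)).eval t * p.eval t := by
  have h := intervalIntegral.integral_mul_deriv_eq_deriv_mul
    (a := a) (b := b) (u := fun t => (Polynomial.derivative p).eval t) (v := fun t => p.eval t)
    (u' := fun t => (Polynomial.derivative (Polynomial.derivative p)).eval t)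
    (v' := fun t => (Polynomial.derivative p).eval t)
    (fun t _ => Polynomial.hasDerivAt _ t) (fun t _ => Polynomial.hasDerivAt _ t)
    ((Polynomial.continuous _).intervalIntegrable _ _)
    ((Polynomial.continuous _).intervalIntegrable _ _)
  simpa [sq] using h

theorem key_lemma (n : ℕ) (hn : 1 ≤ n) (c x : ℝ) (hc : c ≠ 0)
    (hx : x ∈ Set.Ioo (-1:ℝ) 1)
    (Q : Polynomial ℝ) (hdeg : Q.natDegree = n + 1)
    (hQx : Q.eval x = 0)
    (hQ1 : (Polynomial.derivative Q).eval 1 = 1)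
    (hQm1 : (Polynomial.derivative Q).eval (-1) = -1)
    (hmom : ∀ k < n,
      (∫ t in (-1:ℝ)..1, t ^ k * (c * (Q.eval t - |t - x|) + 1)) = 0) :
    (∫ t in (-1:ℝ)..1,
      ((Polynomial.derivative Q).eval t - (if t < x then -1 else 1)) ^ 2) = 2 / c := by
  obtain ⟨hx1, hx2⟩ := hx
  set f : ℝ → ℝ := fun t => ((Polynomial.derivative Q).eval t - (if t < x then -1 else 1)) ^ 2
    with hf
  set F : ℝ → ℝ := fun t => Q.eval t - |t - x| with hF
  have hFcont : Continuous F := (Q.continuous).sub ((continuous_id.sub continuous_const).abs)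
  set P1 : Polynomial ℝ := Q + Polynomial.X - Polynomial.C x with hP1
  set P2 : Polynomial ℝ := Q - Polynomial.X + Polynomial.C x with hP2
  set Q'' : Polynomial ℝ := Polynomial.derivative (Polynomial.derivative Q) with hQ''
  have hP1d : Polynomial.derivative P1 = Polynomial.derivative Q + 1 := by
    simp [hP1]
  have hP2d : Polynomial.derivative P2 = Polynomial.derivative Q - 1 := by
    simp [hP2]
  have hP1dd : Polynomial.derivative (Polynomial.derivative P1) = Q'' := by
    rw [hP1d]; simp [hQ'']
  have hP2dd : Polynomial.derivative (Polynomial.derivative P2) = Q'' := by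
    rw [hP2d]; simp [hQ'', Polynomial.derivative_sub]
  -- a.e. t ≠ x
  have hne : ∀ᵐ t : ℝ ∂(volume : Measure ℝ), t ≠ x := by
    rw [MeasureTheory.ae_iff]
    simp only [not_not]
    rw [show {a : ℝ | a = x} = {x} by ext; simp]
    exact measure_singleton x
  -- left a.e. equality
  have huIocL : Set.uIoc (-1:ℝ) x = Set.Ioc (-1) x := Set.uIoc_of_le (by linarith)
  have haeL : (fun t => ((Polynomial.derivative P1).eval t)^2)
      =ᵐ[volume.restrict (Set.uIoc (-1:ℝ) x)] f := by
    rw [huIocL]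
    filter_upwards [MeasureTheory.ae_restrict_of_ae hne,
      MeasureTheory.ae_restrict_mem measurableSet_Ioc] with t htne htmem
    have ht : t < x := lt_of_le_of_ne htmem.2 htne
    simp only [hf, if_pos ht, hP1d, Polynomial.eval_add, Polynomial.eval_one]
    ring
  have heqR : Set.EqOn (fun t => ((Polynomial.derivative P2).eval t)^2) f (Set.uIcc x 1) := by
    intro t htmem
    rw [Set.uIcc_of_le (by linarith)] at htmem
    have ht : ¬ t < x := not_lt.2 htmem.1
    simp only [hf, if_neg ht, hP2d, Polynomial.eval_sub, Polynomial.eval_one]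
  have hintL : IntervalIntegrable f volume (-1) x :=
    ((Polynomial.continuous _).pow 2).intervalIntegrable (-1) x |>.congr_ae haeL
  have hintR : IntervalIntegrable f volume x 1 := by
    refine (((Polynomial.continuous (Polynomial.derivative P2)).pow 2).intervalIntegrable x 1).congr_ae ?_
    filter_upwards [MeasureTheory.ae_restrict_mem measurableSet_uIoc] with t ht
    exact heqR (Set.uIoc_subset_uIcc ht)
  -- split the integral at x
  have hsplit : (∫ t in (-1:ℝ)..1, f t)
      = (∫ t in (-1:ℝ)..x, f t) + ∫ t in x..1, f t :=
    (intervalIntegral.integral_add_adjacent_intervals hintL hintR).symm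
  -- F agrees with P1 on the left, P2 on the right
  have hFP1 : ∀ t ≤ x, P1.eval t = F t := by
    intro t ht
    simp only [hP1, hF, Polynomial.eval_sub, Polynomial.eval_add, Polynomial.eval_X,
      Polynomial.eval_C, abs_of_nonpos (by linarith : t - x ≤ 0)]
    ring
  have hFP2 : ∀ t, x ≤ t → P2.eval t = F t := by
    intro t ht
    simp only [hP2, hF, Polynomial.eval_sub, Polynomial.eval_add, Polynomial.eval_X,
      Polynomial.eval_C, abs_of_nonneg (by linarith : (0:ℝ) ≤ t - x)]
    ring
  -- left piece via integration by parts
  have hL : (∫ t in (-1:ℝ)..x, f t) = - ∫ t in (-1:ℝ)..x, Q''.eval t * F t := by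
    have haeL' : (∫ t in (-1:ℝ)..x, f t)
        = ∫ t in (-1:ℝ)..x, ((Polynomial.derivative P1).eval t)^2 := by
      apply intervalIntegral.integral_congr_ae
      filter_upwards [hne] with t htne htmem
      have ht : t < x := lt_of_le_of_ne (huIocL ▸ htmem).2 htne
      simp only [hf, if_pos ht, hP1d, Polynomial.eval_add, Polynomial.eval_one]
      ring
    rw [haeL', poly_ibp P1 (-1) x, hP1dd]
    have h1 : P1.eval x = 0 := by
      simp [hP1, hQx]
    have h2 : (Polynomial.derivative P1).eval (-1) = 0 := by
      rw [hP1d]; simp [hQm1]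
    rw [h1, h2]
    rw [intervalIntegral.integral_congr (g := fun t => Q''.eval t * F t) (fun t ht => by
      rw [Set.uIcc_of_le (by linarith)] at ht
      rw [hFP1 t ht.2])]
    ring
  have hR : (∫ t in x..1, f t) = - ∫ t in x..1, Q''.eval t * F t := by
    rw [← intervalIntegral.integral_congr heqR]
    rw [poly_ibp P2 x 1, hP2dd]
    have h1 : P2.eval x = 0 := by
      simp [hP2, hQx]
    have h2 : (Polynomial.derivative P2).eval 1 = 0 := by
      rw [hP2d]; simp [hQ1]
    rw [h1, h2]
    rw [intervalIntegral.integral_congr (g := fun t => Q''.eval t * F t) (fun t ht => by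
      rw [Set.uIcc_of_le (by linarith)] at ht
      rw [hFP2 t ht.1])]
    ring
  -- combine the two pieces of the F integral
  have hQFint : ∀ a b : ℝ, IntervalIntegrable (fun t => Q''.eval t * F t) volume a b :=
    fun a b => ((Polynomial.continuous _).mul hFcont).intervalIntegrable a b
  have hjoin : (∫ t in (-1:ℝ)..x, Q''.eval t * F t) + (∫ t in x..1, Q''.eval t * F t)
      = ∫ t in (-1:ℝ)..1, Q''.eval t * F t :=
    intervalIntegral.integral_add_adjacent_intervals (hQFint _ _) (hQFint _ _)
  -- moments of F
  have hFmom : ∀ k < n, (∫ t in (-1:ℝ)..1, t ^ k * F t)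
      = -(1/c) * ∫ t in (-1:ℝ)..1, (t:ℝ) ^ k := by
    intro k hk
    have h := hmom k hk
    have hint1 : IntervalIntegrable (fun t : ℝ => c * (t ^ k * F t)) volume (-1) 1 :=
      (continuous_const.mul ((continuous_pow k).mul hFcont)).intervalIntegrable _ _
    have hint2 : IntervalIntegrable (fun t : ℝ => t ^ k) volume (-1) 1 :=
      (continuous_pow k).intervalIntegrable _ _
    have heq : (∫ t in (-1:ℝ)..1, t ^ k * (c * (Q.eval t - |t - x|) + 1))
        = (∫ t in (-1:ℝ)..1, (c * (t ^ k * F t) + t ^ k)) := by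
      apply intervalIntegral.integral_congr
      intro t _
      simp only [hF]
      ring
    rw [heq, intervalIntegral.integral_add hint1 hint2,
      intervalIntegral.integral_const_mul] at h
    have h2 : c * (-(1/c) * ∫ t in (-1:ℝ)..1, (t:ℝ)^k) = -∫ t in (-1:ℝ)..1, (t:ℝ)^k := by
      field_simp
    apply mul_left_cancel₀ hc
    rw [h2]
    linarith
  -- degree of Q''
  have hdeg'' : Q''.natDegree < n := by
    have h1 : (Polynomial.derivative Q).natDegree ≤ n :=
      le_trans (Polynomial.natDegree_derivative_le Q) (by omega)
    have h2 : Q''.natDegree ≤ n - 1 :=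
      le_trans (Polynomial.natDegree_derivative_le _) (by omega)
    omega
  -- main moment computation
  have hFQ : (∫ t in (-1:ℝ)..1, Q''.eval t * F t) = -(2/c) := by
    have hexp : (∫ t in (-1:ℝ)..1, Q''.eval t * F t)
        = ∫ t in (-1:ℝ)..1, ∑ k ∈ Finset.range n, Q''.coeff k * (t ^ k * F t) := by
      apply intervalIntegral.integral_congr
      intro t _
      show Q''.eval t * F t = ∑ k ∈ Finset.range n, Q''.coeff k * (t ^ k * F t)
      rw [Polynomial.eval_eq_sum_range' hdeg'' t, Finset.sum_mul]
      exact Finset.sum_congr rfl (fun k _ => by ring)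
    have hsum : (∫ t in (-1:ℝ)..1, ∑ k ∈ Finset.range n, Q''.coeff k * (t ^ k * F t))
        = ∑ k ∈ Finset.range n, Q''.coeff k * ∫ t in (-1:ℝ)..1, t ^ k * F t := by
      rw [intervalIntegral.integral_finset_sum]
      · exact Finset.sum_congr rfl (fun k _ => intervalIntegral.integral_const_mul _ _)
      · intro k _
        exact (continuous_const.mul ((continuous_pow k).mul hFcont)).intervalIntegrable _ _
    have hsum2 : ∑ k ∈ Finset.range n, Q''.coeff k * ∫ t in (-1:ℝ)..1, t ^ k * F t
        = -(1/c) * ∑ k ∈ Finset.range n, Q''.coeff k * ∫ t in (-1:ℝ)..1, (t:ℝ) ^ k := by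
      rw [Finset.mul_sum]
      refine Finset.sum_congr rfl (fun k hk => ?_)
      rw [hFmom k (Finset.mem_range.mp hk)]
      ring
    have hsum3 : ∑ k ∈ Finset.range n, Q''.coeff k * ∫ t in (-1:ℝ)..1, (t:ℝ) ^ k
        = ∫ t in (-1:ℝ)..1, Q''.eval t := by
      have hc1 : ∀ k ∈ Finset.range n,
          Q''.coeff k * (∫ t in (-1:ℝ)..1, (t:ℝ)^k)
            = ∫ t in (-1:ℝ)..1, Q''.coeff k * (t:ℝ)^k :=
        fun k _ => (intervalIntegral.integral_const_mul _ _).symm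
      rw [Finset.sum_congr rfl hc1, ← intervalIntegral.integral_finset_sum
        (fun k _ => ((continuous_pow k).intervalIntegrable (-1) 1).const_mul _)]
      apply intervalIntegral.integral_congr
      intro t _
      show (∑ k ∈ Finset.range n, Q''.coeff k * (t:ℝ)^k) = Q''.eval t
      exact (Polynomial.eval_eq_sum_range' hdeg'' t).symm
    have hQ''int : (∫ t in (-1:ℝ)..1, Q''.eval t) = 2 := by
      rw [hQ'', poly_ftc (Polynomial.derivative Q) (-1) 1, hQ1, hQm1]
      norm_num
    rw [hexp, hsum, hsum2, hsum3, hQ''int]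
    field_simp
  rw [hsplit, hL, hR]
  rw [show (-∫ t in (-1:ℝ)..x, Q''.eval t * F t) + -∫ t in x..1, Q''.eval t * F t
    = -((∫ t in (-1:ℝ)..x, Q''.eval t * F t) + ∫ t in x..1, Q''.eval t * F t) by ring,
    hjoin, hFQ]
  ring
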